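/- arXiv:1402.0554 — 3 statements merged into one kernel-verified Lean document; each statement's English description precedes it below -/
import Mathlib

section
/- Let λ = (λ₁,…,λₙ) be an n-tuple of real numbers with σ_j(λ) > 0 for j = 1,…,k (where 2 ≤ k ≤ n), σ_k(λ)^{1/k} ≥ A⁻¹ > 0, and σ₁(λ) ≤ A for some constant A > 0. Then there exists a constant K₀ > 0 depending only on A, n, k such that K₀⁻¹ ≤ σ_{j-1}(λ|i) ≤ K₀ for all i = 1,…,n and j = 2,…,k, where σ_{j-1}(λ|i) denotes the (j-1)-th elementary symmetric polynomial of λ with the i-th entry set to zero. -/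
set_option linter.unusedSectionVars false
set_option maxHeartbeats 1000000

open Finset

section Elemmas

variable {ι : Type*} [DecidableEq ι]

/-- elementary symmetric function over a base finset -/
noncomputable def E (S : Finset ι) (j : ℕ) (f : ι → ℝ) : ℝ :=
  ∑ t ∈ S.powersetCard j, ∏ x ∈ t, f x

lemma E_zero (S : Finset ι) (f : ι → ℝ) : E S 0 f = 1 := by
  simp [E]

lemma E_eq_zero (S : Finset ι) {j : ℕ} (h : S.card < j) (f : ι → ℝ) : E S j f = 0 := by
  simp [E, Finset.powersetCard_eq_empty.2 h]

lemma E_insert {a : ι} {S : Finset ι} (ha : a ∉ S) (j : ℕ) (f : ι → ℝ) :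
    E (insert a S) (j + 1) f = f a * E S j f + E S (j + 1) f := by
  have hdisj : Disjoint (S.powersetCard (j+1)) ((S.powersetCard j).image (insert a)) := by
    rw [disjoint_right]
    intro t ht hts
    obtain ⟨u, hu, rfl⟩ := mem_image.1 ht
    exact ha ((mem_powersetCard.1 hts).1 (mem_insert_self a u))
  rw [E, powersetCard_succ_insert ha, sum_union hdisj, add_comm, E, E, mul_sum]
  congr 1
  rw [sum_image]
  · refine sum_congr rfl fun t ht => ?_
    rw [prod_insert fun hat => ha ((mem_powersetCard.1 ht).1 hat)]
  · intro t ht u hu htu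
    have h1 : a ∉ t := fun hat => ha ((mem_powersetCard.1 ht).1 hat)
    have h2 : a ∉ u := fun hau => ha ((mem_powersetCard.1 hu).1 hau)
    rw [← erase_insert h1, ← erase_insert h2, htu]

lemma E_erase {i : ι} {S : Finset ι} (hi : i ∈ S) (j : ℕ) (f : ι → ℝ) :
    E S (j + 1) f = f i * E (S.erase i) j f + E (S.erase i) (j + 1) f := by
  conv_lhs => rw [← insert_erase hi]
  exact E_insert (notMem_erase i S) j f


lemma E_one (S : Finset ι) (f : ι → ℝ) : E S 1 f = ∑ i ∈ S, f i := by
  rw [E, powersetCard_one, sum_map]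
  simp

/-- Euler-type identity -/
lemma E_euler (S : Finset ι) (j : ℕ) (f : ι → ℝ) :
    ∑ i ∈ S, f i * E (S.erase i) j f = (j + 1 : ℝ) * E S (j + 1) f := by
  induction S using Finset.induction generalizing j with
  | empty => simp [E_eq_zero (∅ : Finset ι) (by simp : (∅ : Finset ι).card < j + 1)]
  | insert a S ha ih =>
    rw [sum_insert ha, erase_insert ha]
    have hrw : ∀ i ∈ S, f i * E ((insert a S).erase i) j f
        = f i * E (insert a (S.erase i)) j f := by
      intro i hiS
      rw [erase_insert_of_ne (fun h : a = i => ha (h ▸ hiS))]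
    rw [sum_congr rfl hrw]
    cases j with
    | zero =>
      simp only [E_zero, mul_one]
      rw [E_insert ha, E_zero, E_one]
      push_cast
      ring
    | succ m =>
      have hstep : ∀ i ∈ S, f i * E (insert a (S.erase i)) (m + 1) f
          = f a * (f i * E (S.erase i) m f) + f i * E (S.erase i) (m + 1) f := by
        intro i hiS
        rw [E_insert (fun h => ha (mem_of_mem_erase h))]
        ring
      rw [sum_congr rfl hstep, sum_add_distrib, ← mul_sum, ih, ih,
        E_insert ha]
      push_cast
      ring

/-- counting identity -/
lemma E_count (S : Finset ι) (j : ℕ) (f : ι → ℝ) :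
    ∑ i ∈ S, E (S.erase i) (j + 1) f = ((S.card : ℝ) - (j + 1)) * E S (j + 1) f := by
  have h : ∀ i ∈ S, E (S.erase i) (j + 1) f
      = E S (j + 1) f - f i * E (S.erase i) j f := by
    intro i hi
    rw [E_erase hi]
    ring
  rw [sum_congr rfl h, sum_sub_distrib, sum_const, E_euler, nsmul_eq_mul]
  ring

lemma E_translate (S : Finset ι) (f : ι → ℝ) (s : ℝ) (j : ℕ) :
    E S j (fun x => f x + s)
      = ∑ p ∈ antidiagonal j, ((S.card - p.1).choose p.2 : ℝ) * s ^ p.2 * E S p.1 f := by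
  induction S using Finset.induction generalizing j with
  | empty =>
    cases j with
    | zero => simp [E_zero]
    | succ J =>
      rw [E_eq_zero _ (by simp)]
      rw [eq_comm]
      refine Finset.sum_eq_zero fun p hp => ?_
      have hmr : p.1 + p.2 = J + 1 := mem_antidiagonal.1 hp
      match p, hmr with
      | (0, r), h =>
        have : r = J + 1 := by omega
        subst this
        simp [Nat.choose_eq_zero_of_lt (Nat.succ_pos J)]
      | (m+1, r), h =>
        have : (∅ : Finset ι).card < m + 1 := by simp
        rw [E_eq_zero _ this, mul_zero]
  | insert a S ha ih =>
    cases j with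
    | zero => simp [E_zero]
    | succ J =>
      have hc : (insert a S).card = S.card + 1 := card_insert_of_notMem ha
      set c := S.card with hcdef
      -- abbreviations
      set P : ℝ := ∑ p ∈ antidiagonal J, ((c - p.1).choose p.2 : ℝ) * s ^ p.2 * E S p.1 f with hP
      -- left side
      have hL : E (insert a S) (J+1) (fun x => f x + s)
          = f a * P + (s * P + ∑ p ∈ antidiagonal (J+1),
              ((c - p.1).choose p.2 : ℝ) * s ^ p.2 * E S p.1 f) := by
        rw [E_insert ha, ih, ih, hP]
        ring
      rw [hL]
      -- right side: peel m = 0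
      rw [Nat.sum_antidiagonal_succ
        (f := fun p => (((insert a S).card - p.1).choose p.2 : ℝ) * s ^ p.2 * E (insert a S) p.1 f)]
      have hterm : ∀ p ∈ antidiagonal J,
          (((insert a S).card - (p.1+1)).choose p.2 : ℝ) * s ^ p.2 * E (insert a S) (p.1+1) f
          = f a * (((c - p.1).choose p.2 : ℝ) * s ^ p.2 * E S p.1 f)
            + ((c - p.1).choose p.2 : ℝ) * s ^ p.2 * E S (p.1+1) f := by
        intro p hp
        rw [E_insert ha, hc, Nat.succ_sub_succ]
        ring
      rw [sum_congr rfl hterm, sum_add_distrib, ← mul_sum, ← hP]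
      -- now reduce to the core identity
      have hcore : s * P + ∑ p ∈ antidiagonal (J+1), ((c - p.1).choose p.2 : ℝ) * s ^ p.2 * E S p.1 f
          = (((insert a S).card - 0).choose (J+1) : ℝ) * s ^ (J+1) * E (insert a S) 0 f
            + ∑ p ∈ antidiagonal J, ((c - p.1).choose p.2 : ℝ) * s ^ p.2 * E S (p.1+1) f := by
        -- rewrite s * P as a sum over antidiagonal (J+1)
        have hW : (∑ p ∈ antidiagonal (J+1),
            ((c - p.1).choose (p.2 - 1) : ℝ) * s ^ p.2 * E S p.1 f) = E S (J+1) f + s * P := by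
          rw [Nat.sum_antidiagonal_succ'
            (f := fun p => ((c - p.1).choose (p.2 - 1) : ℝ) * s ^ p.2 * E S p.1 f)]
          congr 1
          · simp
          · rw [hP, mul_sum]
            refine sum_congr rfl fun p hp => ?_
            simp only [Nat.add_sub_cancel]
            ring
        -- rewrite RHS sum as a sum over antidiagonal (J+1)
        have hU : ∑ p ∈ antidiagonal J, ((c - p.1).choose p.2 : ℝ) * s ^ p.2 * E S (p.1+1) f
            = (∑ p ∈ antidiagonal (J+1), ((c + 1 - p.1).choose p.2 : ℝ) * s ^ p.2 * E S p.1 f)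
              - ((c + 1).choose (J+1) : ℝ) * s ^ (J+1) := by
          rw [Nat.sum_antidiagonal_succ
            (f := fun p => ((c + 1 - p.1).choose p.2 : ℝ) * s ^ p.2 * E S p.1 f)]
          simp only [Nat.sub_zero, E_zero, mul_one, Nat.succ_sub_succ]
          ring
        rw [hU, hc]
        simp only [Nat.sub_zero, E_zero, mul_one]
        have hkey : ∑ p ∈ antidiagonal (J+1), ((c - p.1).choose (p.2 - 1) : ℝ) * s ^ p.2 * E S p.1 f
              + ∑ p ∈ antidiagonal (J+1), ((c - p.1).choose p.2 : ℝ) * s ^ p.2 * E S p.1 f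
            = (∑ p ∈ antidiagonal (J+1), ((c + 1 - p.1).choose p.2 : ℝ) * s ^ p.2 * E S p.1 f)
              + E S (J+1) f := by
          rw [← sum_add_distrib]
          have hpt : ∀ p ∈ antidiagonal (J+1),
              ((c - p.1).choose (p.2 - 1) : ℝ) * s ^ p.2 * E S p.1 f
                + ((c - p.1).choose p.2 : ℝ) * s ^ p.2 * E S p.1 f
              = ((c + 1 - p.1).choose p.2 : ℝ) * s ^ p.2 * E S p.1 f
                + (if p = (J+1, 0) then E S (J+1) f else 0) := by
            intro p hp
            have hmr : p.1 + p.2 = J + 1 := mem_antidiagonal.1 hp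
            match p, hmr with
            | (m, 0), h =>
              have hm : m = J + 1 := by omega
              subst hm
              simp [Nat.choose_zero_right]
            | (m, r+1), h =>
              have hne : ((m, r+1) : ℕ × ℕ) ≠ (J+1, 0) := by simp
              rw [if_neg hne]
              simp only [Nat.add_sub_cancel]
              by_cases hmc : m ≤ c
              · have h1 : c + 1 - m = (c - m) + 1 := by omega
                rw [h1, Nat.choose_succ_succ, add_zero]
                push_cast
                ring
              · have hz : E S m f = 0 := E_eq_zero _ (by omega) f
                rw [hz]
                ring
          rw [sum_congr rfl hpt, sum_add_distrib, Finset.sum_ite_eq' (antidiagonal (J+1)) ((J+1, 0) : ℕ × ℕ) (fun _ => E S (J+1) f)]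
          simp [HasAntidiagonal.mem_antidiagonal]
        -- conclude by linear arithmetic
        linarith [hkey]
      linarith [hcore]

lemma E_cont_translate (S : Finset ι) (j : ℕ) (g : ι → ℝ) :
    Continuous fun s : ℝ => E S j (fun x => g x + s) := by
  unfold E
  apply continuous_finset_sum
  intro t _
  apply continuous_finset_prod
  intro x _
  exact continuous_const.add continuous_id

lemma nonneg_limit {h : ℝ → ℝ} (hc : Continuous h) (hp : ∀ s, 0 < s → 0 ≤ h s) : 0 ≤ h 0 := by
  have ht : Filter.Tendsto h (nhdsWithin 0 (Set.Ioi 0)) (nhds (h 0)) :=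
    (hc.continuousAt).tendsto.mono_left nhdsWithin_le_nhds
  exact ge_of_tendsto ht (Filter.eventually_iff_exists_mem.2
    ⟨Set.Ioi 0, self_mem_nhdsWithin, fun s hs => hp s hs⟩)


theorem posE (M : ℕ) : ∀ (k : ℕ) (S : Finset ι) (f : ι → ℝ), S.card + k ≤ M → k ≤ S.card →
    (∀ j, 1 ≤ j → j ≤ k → 0 < E S j f) →
    ∀ i ∈ S, ∀ j, 1 ≤ j → j + 1 ≤ k → 0 < E (S.erase i) j f := by
  induction M using Nat.strong_induction_on with
  | _ M IH =>
  intro k S f hM hk hf i hi j hj1 hjk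
  rcases lt_or_eq_of_le hjk with hjk' | hjk'
  · have hM' : S.card + (j + 1) < M := by omega
    exact IH (S.card + (j+1)) hM' (j+1) S f le_rfl (by omega)
      (fun j' h1 h2 => hf j' h1 (by omega)) i hi j hj1 le_rfl
  subst hjk'
  by_contra hneg
  push_neg at hneg
  set S₀ := S.erase i with hS₀
  have hc₀ : S₀.card = S.card - 1 := card_erase_of_mem hi
  have hcS : 1 ≤ S.card := card_pos.2 ⟨i, hi⟩
  have hjc₀ : j ≤ S₀.card := by omega
  have hInner : ∀ (f' : ι → ℝ), (∀ j', 1 ≤ j' → j' ≤ j + 1 → 0 < E S j' f') →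
      ∀ m, 1 ≤ m → m + 1 ≤ j → 0 < E S₀ m f' := by
    intro f' hf' m hm1 hmj
    have hM' : S.card + j < M := by omega
    exact IH (S.card + j) hM' j S f' le_rfl (by omega)
      (fun j' h1 h2 => hf' j' h1 (by omega)) i hi m hm1 hmj
  have hcont : Continuous fun s : ℝ => E S₀ j (fun x => f x + s) := E_cont_translate S₀ j f
  have hzero : E S₀ j (fun x => f x + (0:ℝ)) ≤ 0 := by
    have heq0 : (fun x => f x + (0:ℝ)) = f := funext fun x => add_zero (f x)
    rw [heq0]; exact hneg
  have hlower : ∀ s : ℝ, 0 ≤ s →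
      ((S₀.card.choose j : ℝ)) * s ^ j + E S₀ j f ≤ E S₀ j (fun x => f x + s) := by
    intro s hs
    rw [E_translate]
    have hmem : ((j, 0) : ℕ × ℕ) ∈ antidiagonal j := by simp
    rw [← Finset.add_sum_erase _ _ hmem]
    simp only [Nat.choose_zero_right, Nat.cast_one, pow_zero, one_mul, mul_one]
    have hmem2 : ((0, j) : ℕ × ℕ) ∈ (antidiagonal j).erase ((j, 0) : ℕ × ℕ) := by
      have hne : ((0, j) : ℕ × ℕ) ≠ ((j, 0) : ℕ × ℕ) := by
        intro hc
        have h1 : (0:ℕ) = j := congrArg Prod.fst hc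
        omega
      exact Finset.mem_erase.2 ⟨hne, by simp⟩
    have hnn : ∀ p ∈ (antidiagonal j).erase ((j,0) : ℕ × ℕ),
        0 ≤ ((S₀.card - p.1).choose p.2 : ℝ) * s ^ p.2 * E S₀ p.1 f := by
      intro p hp
      rw [mem_erase, HasAntidiagonal.mem_antidiagonal] at hp
      obtain ⟨hpne, hpsum⟩ := hp
      have hEnn : 0 ≤ E S₀ p.1 f := by
        rcases Nat.eq_zero_or_pos p.1 with h0 | h1
        · rw [h0, E_zero]; norm_num
        · rcases lt_or_eq_of_le (show p.1 ≤ j by omega) with hlt | heq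
          · exact le_of_lt (hInner f hf p.1 h1 (by omega))
          · exact absurd (Prod.ext heq (by omega)) hpne
      positivity
    have hstep := Finset.single_le_sum hnn hmem2
    have hone : ((S₀.card - 0).choose j : ℝ) * s ^ j * E S₀ 0 f
        = (S₀.card.choose j : ℝ) * s ^ j := by
      rw [E_zero]; simp
    rw [hone] at hstep
    linarith
  set B : ℝ := E S₀ j f with hB
  set s₁ : ℝ := 1 - B with hs₁
  have hchoose1 : (1:ℝ) ≤ (S₀.card.choose j : ℝ) := by
    exact_mod_cast Nat.choose_pos hjc₀
  have hs₁1 : (1:ℝ) ≤ s₁ := by rw [hs₁]; linarith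
  have hpos1 : 0 < E S₀ j (fun x => f x + s₁) := by
    have h1 := hlower s₁ (by linarith)
    have h2 : s₁ ≤ s₁ ^ j := le_self_pow₀ (by linarith) (by omega)
    have hp0 : (0:ℝ) ≤ s₁ ^ j := by positivity
    have h3 : s₁ ^ j ≤ (S₀.card.choose j : ℝ) * s₁ ^ j := le_mul_of_one_le_left hp0 hchoose1
    rw [hs₁] at h2 ⊢
    rw [hB] at hneg
    linarith [h1, h2, h3]
  have hIVT := intermediate_value_Icc (by linarith : (0:ℝ) ≤ s₁) hcont.continuousOn
  have h0mem : (0:ℝ) ∈ Set.Icc (E S₀ j (fun x => f x + (0:ℝ))) (E S₀ j (fun x => f x + s₁)) :=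
    ⟨hzero, le_of_lt hpos1⟩
  obtain ⟨s', hs'mem, hs'⟩ := hIVT h0mem
  simp only at hs'
  have hs'0 : 0 ≤ s' := hs'mem.1
  set g : ι → ℝ := fun x => f x + s' with hg
  have hg0 : E S₀ j g = 0 := hs'
  have hgΓ : ∀ j', 1 ≤ j' → j' ≤ j + 1 → 0 < E S j' g := by
    intro j' h1 h2
    rw [hg, E_translate]
    have hmem : ((j', 0) : ℕ × ℕ) ∈ antidiagonal j' := by simp
    refine Finset.sum_pos' (fun p hp => ?_) ⟨(j', 0), hmem, ?_⟩
    · rw [HasAntidiagonal.mem_antidiagonal] at hp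
      have hEnn : 0 ≤ E S p.1 f := by
        rcases Nat.eq_zero_or_pos p.1 with h0 | h1'
        · rw [h0, E_zero]; norm_num
        · exact le_of_lt (hf p.1 h1' (by omega))
      positivity
    · simp only [Nat.choose_zero_right, Nat.cast_one, pow_zero, one_mul, mul_one]
      exact hf j' h1 h2
  rcases lt_or_eq_of_le hk with hlt | heqcard
  · -- k = j + 1 < card S
    have hkc₀ : j + 1 ≤ S₀.card := by omega
    have hcat : ∀ m, m ≤ j + 1 → m ≠ j → 0 < E S₀ m g := by
      intro m hm hne
      rcases Nat.eq_zero_or_pos m with h0 | h1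
      · rw [h0, E_zero]; norm_num
      · rcases lt_or_eq_of_le hm with hlt' | heq'
        · exact hInner g hgΓ m h1 (by omega)
        · -- m = j + 1
          have hEe := E_erase hi j g
          rw [← hS₀, hg0, mul_zero, zero_add] at hEe
          rw [heq']
          rw [← hEe]
          exact hgΓ (j+1) (by omega) le_rfl
    have hcat0 : ∀ m, m ≤ j + 1 → 0 ≤ E S₀ m g := by
      intro m hm
      by_cases hmj : m = j
      · rw [hmj, hg0]
      · exact le_of_lt (hcat m hm hmj)
    have hgs : ∀ s : ℝ, 0 < s → ∀ j', 1 ≤ j' → j' ≤ j + 1 → 0 < E S₀ j' (fun x => g x + s) := by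
      intro s hs j' h1 h2
      rw [E_translate]
      have hnn : ∀ p ∈ antidiagonal j',
          0 ≤ ((S₀.card - p.1).choose p.2 : ℝ) * s ^ p.2 * E S₀ p.1 g := by
        intro p hp
        rw [HasAntidiagonal.mem_antidiagonal] at hp
        have hEnn : 0 ≤ E S₀ p.1 g := hcat0 p.1 (by omega)
        positivity
      by_cases hj' : j' = j
      · refine Finset.sum_pos' hnn ⟨(j-1, 1), ?_, ?_⟩
        · rw [HasAntidiagonal.mem_antidiagonal]; omega
        · have hE : 0 < E S₀ (j-1) g := hcat (j-1) (by omega) (by omega)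
          have hch : 0 < ((S₀.card - (j-1)).choose 1 : ℝ) := by
            rw [Nat.choose_one_right]
            exact_mod_cast Nat.sub_pos_of_lt (by omega)
          have : (0:ℝ) < s ^ 1 := by simpa using hs
          positivity
      · refine Finset.sum_pos' hnn ⟨(j', 0), by simp, ?_⟩
        simp only [Nat.choose_zero_right, Nat.cast_one, pow_zero, one_mul, mul_one]
        exact hcat j' h2 hj'
    have houter : ∀ s, 0 < s → ∀ x ∈ S₀, 0 < E (S₀.erase x) j (fun y => g y + s) := by
      intro s hs x hx
      have hM' : S₀.card + (j+1) < M := by omega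
      exact IH (S₀.card + (j+1)) hM' (j+1) S₀ (fun y => g y + s) le_rfl hkc₀
        (hgs s hs) x hx j hj1 le_rfl
    have hlim : ∀ x ∈ S₀, 0 ≤ E (S₀.erase x) j g := by
      intro x hx
      have hcx : Continuous fun s : ℝ => E (S₀.erase x) j (fun y => g y + s) :=
        E_cont_translate _ _ _
      have h0 := nonneg_limit hcx (fun s hs => le_of_lt (houter s hs x hx))
      have heq0 : (fun y => g y + (0:ℝ)) = g := funext fun y => add_zero (g y)
      rwa [heq0] at h0
    have hcount : ∑ x ∈ S₀, E (S₀.erase x) j g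
        = ((S₀.card : ℝ) - (((j-1) : ℕ) + 1)) * E S₀ j g := by
      have := E_count S₀ (j-1) g
      rwa [show (j-1)+1 = j from by omega] at this
    have hsum0 : ∑ x ∈ S₀, E (S₀.erase x) j g = 0 := by
      rw [hcount, hg0, mul_zero]
    have heach : ∀ x ∈ S₀, E (S₀.erase x) j g = 0 :=
      (Finset.sum_eq_zero_iff_of_nonneg hlim).1 hsum0
    have heuler := E_euler S₀ j g
    have hz : ∑ x ∈ S₀, g x * E (S₀.erase x) j g = 0 :=
      Finset.sum_eq_zero fun x hx => by rw [heach x hx, mul_zero]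
    rw [hz] at heuler
    have htop : 0 < E S₀ (j+1) g := hcat (j+1) le_rfl (by omega)
    have hjpos : (0:ℝ) < (j:ℝ) + 1 := by positivity
    nlinarith [heuler, htop, hjpos]
  · -- k = j + 1 = card S
    have hEe := E_erase hi j g
    rw [← hS₀, hg0, mul_zero, zero_add] at hEe
    have h2 : E S₀ (j+1) g = 0 := E_eq_zero _ (by omega) g
    have h3 := hgΓ (j+1) (by omega) le_rfl
    rw [hEe, h2] at h3
    exact lt_irrefl 0 h3

lemma E_continuousF (S : Finset ι) (j : ℕ) : Continuous fun f : ι → ℝ => E S j f := by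
  unfold E
  apply continuous_finset_sum
  intro t _
  apply continuous_finset_prod
  intro x _
  exact continuous_apply x

lemma E_abs_le (S : Finset ι) (m : ℕ) (f : ι → ℝ) (B : ℝ) (hB0 : 0 ≤ B)
    (h : ∀ x ∈ S, |f x| ≤ B) : |E S m f| ≤ (S.card.choose m : ℝ) * B ^ m := by
  calc |E S m f| ≤ ∑ t ∈ S.powersetCard m, |∏ x ∈ t, f x| := Finset.abs_sum_le_sum_abs _ _
    _ ≤ ∑ t ∈ S.powersetCard m, B ^ m := by
        refine Finset.sum_le_sum fun t ht => ?_
        rw [Finset.abs_prod]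
        have hcard : t.card = m := (mem_powersetCard.1 ht).2
        have hsub : t ⊆ S := (mem_powersetCard.1 ht).1
        calc ∏ x ∈ t, |f x| ≤ ∏ x ∈ t, B :=
              Finset.prod_le_prod (fun x _ => abs_nonneg _) (fun x hx => h x (hsub hx))
          _ = B ^ m := by rw [Finset.prod_const, hcard]
    _ = (S.card.choose m : ℝ) * B ^ m := by rw [sum_const, card_powersetCard, nsmul_eq_mul]

end Elemmas

lemma choose_le_two_pow (n m : ℕ) : n.choose m ≤ 2 ^ n := by
  by_cases h : m ≤ n
  · calc n.choose m ≤ ∑ x ∈ Finset.range (n+1), n.choose x :=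
        Finset.single_le_sum (fun i _ => Nat.zero_le _) (mem_range.2 (by omega))
      _ = 2 ^ n := Nat.sum_range_choose n
  · rw [Nat.choose_eq_zero_of_lt (by omega)]
    exact Nat.zero_le _

/-- The `k`-th elementary symmetric polynomial of `lam : Fin n → ℝ`. -/
def esymm (n k : ℕ) (lam : Fin n → ℝ) : ℝ :=
  ∑ s ∈ Finset.powersetCard k (Finset.univ : Finset (Fin n)), ∏ i ∈ s, lam i

lemma esymm_eq_E (n j : ℕ) (lam : Fin n → ℝ) : esymm n j lam = E Finset.univ j lam := rfl

lemma esymm_update_eq_E (n j : ℕ) (lam : Fin n → ℝ) (i : Fin n) :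
    esymm n j (Function.update lam i 0) = E ((Finset.univ : Finset (Fin n)).erase i) j lam := by
  rw [esymm_eq_E, E, E]
  rw [← Finset.sum_subset (Finset.powersetCard_mono (Finset.erase_subset i Finset.univ))]
  · refine Finset.sum_congr rfl fun t ht => ?_
    refine Finset.prod_congr rfl fun x hx => ?_
    have hxi : x ≠ i := by
      have := (mem_powersetCard.1 ht).1 hx
      exact Finset.ne_of_mem_erase this
    exact Function.update_of_ne hxi 0 lam
  · intro t ht hnt
    have hit : i ∈ t := by
      by_contra hit
      apply hnt
      rw [mem_powersetCard] at ht ⊢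
      exact ⟨fun x hx => Finset.mem_erase.2 ⟨fun hxi => hit (hxi ▸ hx), ht.1 hx⟩, ht.2⟩
    exact Finset.prod_eq_zero hit (Function.update_self i 0 lam)

theorem sigma_truncated_two_sided_bound (n k : ℕ) (hk2 : 2 ≤ k) (hkn : k ≤ n)
    (A : ℝ) (hA : 0 < A) :
    ∃ K₀ : ℝ, 0 < K₀ ∧ ∀ lam : Fin n → ℝ,
      (∀ j : ℕ, 1 ≤ j → j ≤ k → 0 < esymm n j lam) →
      A⁻¹ ≤ esymm n k lam ^ ((1 : ℝ) / k) →
      esymm n 1 lam ≤ A →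
      ∀ i : Fin n, ∀ j : ℕ, 2 ≤ j → j ≤ k →
        K₀⁻¹ ≤ esymm n (j - 1) (Function.update lam i 0) ∧
        esymm n (j - 1) (Function.update lam i 0) ≤ K₀ := by
  classical
  have hn0 : 0 < n := by omega
  have hn0' : (0:ℝ) < (n:ℝ) := by exact_mod_cast hn0
  have hcardu : (Finset.univ : Finset (Fin n)).card = n := by simp
  set B : ℝ := max A 1 with hB
  have hB1 : (1:ℝ) ≤ B := le_max_right _ _
  have hB0 : (0:ℝ) ≤ B := by linarith
  set UB : ℝ := 2 ^ n * B ^ n with hUB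
  have hUBpos : 0 < UB := by positivity
  set δ : ℕ → ℝ := fun j => A⁻¹ ^ k * ((A * n)⁻¹) ^ (k - j) with hδ
  have hδpos : ∀ j, 0 < δ j := by
    intro j
    rw [hδ]
    positivity
  set ΓS : Set (Fin n → ℝ) :=
    {lam | (∀ i, |lam i| ≤ A) ∧ ∀ j, 1 ≤ j → j ≤ k → δ j ≤ esymm n j lam} with hΓS
  have hposΓ : ∀ lam ∈ ΓS, ∀ i : Fin n, ∀ m, 1 ≤ m → m + 1 ≤ k →
      0 < E ((Finset.univ : Finset (Fin n)).erase i) m lam := by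
    intro lam hlam i m h1 h2
    refine posE (n + k) k Finset.univ lam (by rw [hcardu]) (by rw [hcardu]; exact hkn)
      ?_ i (mem_univ i) m h1 h2
    intro j hj1 hjk
    rw [← esymm_eq_E]
    exact lt_of_lt_of_le (hδpos j) (hlam.2 j hj1 hjk)
  have hclosed : IsClosed ΓS := by
    have hrw : ΓS = (⋂ i : Fin n, {lam : Fin n → ℝ | |lam i| ≤ A}) ∩
        ⋂ j : ℕ, ⋂ (_ : 1 ≤ j), ⋂ (_ : j ≤ k), {lam : Fin n → ℝ | δ j ≤ esymm n j lam} := by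
      ext lam
      simp only [hΓS, Set.mem_setOf_eq, Set.mem_inter_iff, Set.mem_iInter]
    rw [hrw]
    refine IsClosed.inter (isClosed_iInter fun i =>
        isClosed_le ((continuous_apply i).abs) continuous_const)
      (isClosed_iInter fun j => isClosed_iInter fun _ => isClosed_iInter fun _ =>
        isClosed_le continuous_const ?_)
    exact E_continuousF Finset.univ j
  have hcompact : IsCompact ΓS := by
    refine IsCompact.of_isClosed_subset
      (isCompact_univ_pi fun _ : Fin n => isCompact_Icc (a := -A) (b := A)) hclosed ?_
    intro lam hlam x _
    exact abs_le.1 (hlam.1 x)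
  have hex : ∀ p : Fin n × ℕ, ∃ ev : ℝ, 0 < ev ∧ (2 ≤ p.2 → p.2 ≤ k →
      ∀ lam ∈ ΓS, ev ≤ E ((Finset.univ : Finset (Fin n)).erase p.1) (p.2 - 1) lam) := by
    rintro ⟨i, j⟩
    by_cases hj : 2 ≤ j ∧ j ≤ k
    · rcases Set.eq_empty_or_nonempty ΓS with hempty | hne
      · exact ⟨1, one_pos, fun _ _ lam hlam => by rw [hempty] at hlam; exact absurd hlam (Set.notMem_empty lam)⟩
      · obtain ⟨x, hxΓ, hxmin⟩ := hcompact.exists_isMinOn hne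
          (E_continuousF ((Finset.univ : Finset (Fin n)).erase i) (j-1)).continuousOn
        exact ⟨E ((Finset.univ : Finset (Fin n)).erase i) (j-1) x,
          hposΓ x hxΓ i (j-1) (by omega) (by omega),
          fun _ _ lam hlam => hxmin hlam⟩
    · exact ⟨1, one_pos, fun h1 h2 => absurd ⟨h1, h2⟩ hj⟩
  choose ev hev using hex
  have hFne : ((Finset.univ : Finset (Fin n)) ×ˢ Finset.Icc 2 k).Nonempty := by
    refine ⟨(⟨0, hn0⟩, 2), ?_⟩
    rw [Finset.mem_product]
    exact ⟨mem_univ _, Finset.mem_Icc.2 ⟨le_rfl, hk2⟩⟩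
  set ε : ℝ := Finset.inf' _ hFne ev with hε
  have hεpos : 0 < ε := by
    rw [hε, Finset.lt_inf'_iff]
    exact fun p _ => (hev p).1
  refine ⟨max UB ε⁻¹, lt_of_lt_of_le hUBpos (le_max_left _ _), ?_⟩
  intro lam hf hrpow hs1
  have hfE : ∀ j, 1 ≤ j → j ≤ k → 0 < E (Finset.univ : Finset (Fin n)) j lam := by
    intro j h1 h2
    rw [← esymm_eq_E]
    exact hf j h1 h2
  have hposlam : ∀ (i : Fin n) (m : ℕ), 1 ≤ m → m + 1 ≤ k →
      0 < E ((Finset.univ : Finset (Fin n)).erase i) m lam :=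
    fun i m h1 h2 => posE (n+k) k Finset.univ lam (by rw [hcardu])
      (by rw [hcardu]; exact hkn) hfE i (mem_univ i) m h1 h2
  -- bound on entries
  have habs : ∀ i, |lam i| ≤ A := by
    have hσ1 : esymm n 1 lam = ∑ x, lam x := by rw [esymm_eq_E, E_one]
    have herase1 : ∀ i : Fin n, E ((Finset.univ : Finset (Fin n)).erase i) 1 lam
        = esymm n 1 lam - lam i := by
      intro i
      have h := E_erase (mem_univ i) 0 lam
      rw [E_zero, mul_one] at h
      rw [esymm_eq_E]
      norm_num at h ⊢
      linarith [h]
    have heuler := E_euler (Finset.univ : Finset (Fin n)) 1 lam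
    have h1 : ∑ x : Fin n, lam x * E ((Finset.univ : Finset (Fin n)).erase x) 1 lam
        = ∑ x : Fin n, (lam x * esymm n 1 lam - (lam x)^2) :=
      Finset.sum_congr rfl fun x _ => by rw [herase1]; ring
    rw [h1, Finset.sum_sub_distrib, ← Finset.sum_mul, ← hσ1] at heuler
    -- heuler : σ1 * σ1 - Σ lam² = 2 * E univ 2 lam
    have hsq : ∑ x : Fin n, (lam x)^2 = (esymm n 1 lam)^2 - 2 * esymm n 2 lam := by
      rw [esymm_eq_E (n := n) 2 lam] at *
      norm_num at heuler
      nlinarith [heuler]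
    intro i
    have hile : (lam i)^2 ≤ ∑ x : Fin n, (lam x)^2 :=
      Finset.single_le_sum (fun x _ => sq_nonneg (lam x)) (mem_univ i)
    have hσ2 : 0 < esymm n 2 lam := hf 2 (by omega) hk2
    have hσ1pos : 0 < esymm n 1 lam := hf 1 (by omega) (by omega)
    have hsqA : (lam i)^2 ≤ A^2 := by nlinarith
    nlinarith [abs_nonneg (lam i), sq_abs (lam i)]
  -- lower bound on top symmetric function
  have hσk : A⁻¹ ^ k ≤ esymm n k lam := by
    have h0 : (0:ℝ) ≤ esymm n k lam := le_of_lt (hf k (by omega) le_rfl)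
    have h1 : (A⁻¹) ^ k ≤ (esymm n k lam ^ ((1:ℝ)/k)) ^ k :=
      pow_le_pow_left₀ (by positivity) hrpow k
    rwa [show (1:ℝ)/(k:ℝ) = ((k:ℕ):ℝ)⁻¹ by norm_num,
      Real.rpow_inv_natCast_pow h0 (by omega)] at h1
  -- chain inequality
  have hchain : ∀ j, 2 ≤ j → j ≤ k → esymm n j lam ≤ A * n * esymm n (j-1) lam := by
    intro j h2 hjk
    have hj1 : (j - 1) + 1 = j := by omega
    have heuler := E_euler (Finset.univ : Finset (Fin n)) (j-1) lam
    rw [hj1] at heuler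
    have hcount := E_count (Finset.univ : Finset (Fin n)) (j-2) lam
    rw [show (j-2)+1 = j-1 from by omega, hcardu] at hcount
    have hsum : ∑ i : Fin n, lam i * E ((Finset.univ : Finset (Fin n)).erase i) (j-1) lam
        ≤ A * ∑ i : Fin n, E ((Finset.univ : Finset (Fin n)).erase i) (j-1) lam := by
      rw [Finset.mul_sum]
      refine Finset.sum_le_sum fun i _ => ?_
      have hE := hposlam i (j-1) (by omega) (by omega)
      have hlA : lam i ≤ A := le_trans (le_abs_self _) (habs i)
      nlinarith
    have hEj : 0 < E (Finset.univ : Finset (Fin n)) j lam := hfE j (by omega) hjk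
    have hEj1 : 0 < E (Finset.univ : Finset (Fin n)) (j-1) lam := hfE (j-1) (by omega) (by omega)
    have hcoef1 : (1:ℝ) ≤ ((j-1 : ℕ) : ℝ) + 1 := by
      have : (0:ℝ) ≤ ((j-1:ℕ):ℝ) := Nat.cast_nonneg _
      linarith
    have hcoef2 : ((n:ℝ) - (((j-2 : ℕ) : ℝ) + 1)) ≤ (n:ℝ) := by
      have : (0:ℝ) ≤ ((j-2:ℕ):ℝ) := Nat.cast_nonneg _
      linarith
    calc esymm n j lam = E (Finset.univ : Finset (Fin n)) j lam := esymm_eq_E n j lam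
      _ ≤ (((j-1 : ℕ) : ℝ) + 1) * E (Finset.univ : Finset (Fin n)) j lam :=
          le_mul_of_one_le_left hEj.le hcoef1
      _ = ∑ i : Fin n, lam i * E ((Finset.univ : Finset (Fin n)).erase i) (j-1) lam :=
          heuler.symm
      _ ≤ A * ∑ i : Fin n, E ((Finset.univ : Finset (Fin n)).erase i) (j-1) lam := hsum
      _ = A * (((n:ℝ) - (((j-2 : ℕ) : ℝ) + 1)) * E (Finset.univ : Finset (Fin n)) (j-1) lam) := by
          rw [hcount]
      _ ≤ A * ((n:ℝ) * E (Finset.univ : Finset (Fin n)) (j-1) lam) := by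
          refine mul_le_mul_of_nonneg_left ?_ hA.le
          exact mul_le_mul_of_nonneg_right hcoef2 hEj1.le
      _ = A * n * esymm n (j-1) lam := by rw [esymm_eq_E]; ring
  -- membership in the compact set
  have hδmem : ∀ j, 1 ≤ j → j ≤ k → δ j ≤ esymm n j lam := by
    have hdown : ∀ d, d ≤ k - 1 → δ (k - d) ≤ esymm n (k - d) lam := by
      intro d
      induction d with
      | zero =>
        intro _
        have hδk : δ (k - 0) = A⁻¹ ^ k := by
          rw [hδ]
          simp
        rw [hδk, Nat.sub_zero]
        exact hσk
      | succ d ihd =>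
        intro hdk
        have hprev := ihd (by omega)
        have hj2 : 2 ≤ k - d := by omega
        have hjk' : k - d ≤ k := by omega
        have hc := hchain (k - d) hj2 hjk'
        have hidx : k - (d+1) = (k - d) - 1 := by omega
        have hδstep : δ ((k-d)-1) = δ (k-d) * (A * n)⁻¹ := by
          rw [hδ]
          simp only
          rw [show k - ((k-d)-1) = (k - (k-d)) + 1 from by omega, pow_succ]
          ring
        rw [hidx, hδstep]
        have hAn : (0:ℝ) < A * n := by positivity
        have h1 : δ (k-d) * (A*n)⁻¹ ≤ esymm n (k-d) lam * (A*n)⁻¹ :=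
          mul_le_mul_of_nonneg_right hprev (by positivity)
        have h2 : esymm n (k-d) lam * (A*n)⁻¹ ≤ esymm n ((k-d)-1) lam := by
          rw [mul_inv_le_iff₀ hAn]
          linarith [hc]
        linarith
    intro j h1 hjk
    have := hdown (k - j) (by omega)
    rwa [show k - (k - j) = j from by omega] at this
  have hmem : lam ∈ ΓS := ⟨habs, hδmem⟩
  -- conclusion
  intro i j hj2 hjk
  have hmemF : (i, j) ∈ ((Finset.univ : Finset (Fin n)) ×ˢ Finset.Icc 2 k) := by
    rw [Finset.mem_product]
    exact ⟨mem_univ _, Finset.mem_Icc.2 ⟨hj2, hjk⟩⟩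
  have hlow : ε ≤ E ((Finset.univ : Finset (Fin n)).erase i) (j-1) lam :=
    le_trans (Finset.inf'_le ev hmemF) ((hev (i,j)).2 hj2 hjk lam hmem)
  constructor
  · rw [esymm_update_eq_E]
    refine le_trans ?_ hlow
    have h1 : ε⁻¹ ≤ max UB ε⁻¹ := le_max_right _ _
    have h2 : (max UB ε⁻¹)⁻¹ ≤ (ε⁻¹)⁻¹ := inv_anti₀ (by positivity) h1
    rwa [inv_inv] at h2
  · rw [esymm_update_eq_E]
    have hb := E_abs_le ((Finset.univ : Finset (Fin n)).erase i) (j-1) lam B hB0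
      (fun x _ => le_trans (habs x) (le_max_left A 1))
    have hcard' : ((Finset.univ : Finset (Fin n)).erase i).card = n - 1 := by
      rw [card_erase_of_mem (mem_univ i), hcardu]
    rw [hcard'] at hb
    have hch : ((n-1).choose (j-1) : ℝ) ≤ 2^n := by
      have h1 : (n-1).choose (j-1) ≤ 2^(n-1) := choose_le_two_pow (n-1) (j-1)
      have h2 : (2:ℕ)^(n-1) ≤ 2^n := Nat.pow_le_pow_right (by norm_num) (by omega)
      exact_mod_cast le_trans h1 h2
    have hpw : B^(j-1) ≤ B^n := pow_le_pow_right₀ hB1 (by omega)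
    calc E ((Finset.univ : Finset (Fin n)).erase i) (j-1) lam
        ≤ |E ((Finset.univ : Finset (Fin n)).erase i) (j-1) lam| := le_abs_self _
      _ ≤ ((n-1).choose (j-1) : ℝ) * B^(j-1) := hb
      _ ≤ 2^n * B^n := by
          refine mul_le_mul hch hpw (by positivity) (by positivity)
      _ ≤ max UB ε⁻¹ := by rw [hUB] at *; exact le_max_left _ _
end

section
/- Let λ = (λ₁,…,λₙ) satisfy σ_j(λ) > 0 for j = 1,…,k (with 2 ≤ k ≤ n), σ_k(λ)^{1/k} ≥ A⁻¹ > 0, and σ₁(λ) ≤ A. Then there is K₀ > 0 depending only on A, n, k such that −K₀ ≤ λⱼ ≤ K₀ for all j = 1,…,n. -/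
lemma sq_sum_eq_aux {α : Type*} [DecidableEq α] (s : Finset α) (f : α → ℝ) :
    (∑ i ∈ s, f i) ^ 2 = ∑ i ∈ s, f i ^ 2
      + 2 * ∑ t ∈ s.powersetCard 2, ∏ i ∈ t, f i := by
  induction s using Finset.induction_on with
  | empty =>
    rw [show Finset.powersetCard 2 (∅ : Finset α) = ∅ by
      simp [Finset.powersetCard_eq_empty]]
    simp
  | @insert x s hx hxs =>
    rw [Finset.sum_insert hx, Finset.sum_insert hx, add_sq,
      Finset.powersetCard_succ_insert hx, Finset.sum_union, Finset.sum_image, hxs]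
    · have h1 : ∑ t ∈ s.powersetCard 1, ∏ i ∈ t, f i = ∑ i ∈ s, f i := by
        rw [Finset.powersetCard_one, Finset.sum_map]
        simp
      have h2 : ∀ t ∈ s.powersetCard 1, ∏ i ∈ insert x t, f i = f x * ∏ i ∈ t, f i := by
        intro t ht
        rw [Finset.mem_powersetCard] at ht
        exact Finset.prod_insert fun hxt => hx (ht.1 hxt)
      rw [Finset.sum_congr rfl h2, ← Finset.mul_sum, h1]
      ring
    · intro a ha b hb hab
      rw [Finset.mem_coe, Finset.mem_powersetCard] at ha hb
      have : ∀ t : Finset α, t ⊆ s → (insert x t).erase x = t := fun t hts =>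
        Finset.erase_insert fun hxt => hx (hts hxt)
      rw [← this a ha.1, ← this b hb.1, hab]
    · rw [Finset.disjoint_right]
      intro t ht hts
      rw [Finset.mem_image] at ht
      rw [Finset.mem_powersetCard] at hts
      obtain ⟨u, hu, rfl⟩ := ht
      exact hx (hts.1 (Finset.mem_insert_self x u))

theorem eigenvalue_two_sided_bound (n k : ℕ) (hk2 : 2 ≤ k) (hkn : k ≤ n)
    (A : ℝ) (hA : 0 < A) :
    ∃ K₀ : ℝ, 0 < K₀ ∧ ∀ lam : Fin n → ℝ,
      (∀ j : ℕ, 1 ≤ j → j ≤ k → 0 < esymm n j lam) →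
      A⁻¹ ≤ esymm n k lam ^ ((1 : ℝ) / k) →
      esymm n 1 lam ≤ A →
      ∀ j : Fin n, -K₀ ≤ lam j ∧ lam j ≤ K₀ := by
  refine ⟨A, hA, fun lam hpos _ hA1 j => ?_⟩
  have h1 : esymm n 1 lam = ∑ i, lam i := by
    unfold esymm
    rw [Finset.powersetCard_one, Finset.sum_map]
    simp
  have hs1 : 0 < ∑ i, lam i := h1 ▸ hpos 1 le_rfl (by omega)
  have hs2 : 0 < esymm n 2 lam := hpos 2 (by omega) hk2
  have hsq := sq_sum_eq_aux (Finset.univ : Finset (Fin n)) lam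
  have hj2 : lam j ^ 2 ≤ (∑ i, lam i) ^ 2 := by
    have : lam j ^ 2 ≤ ∑ i, lam i ^ 2 :=
      Finset.single_le_sum (fun i _ => sq_nonneg (lam i)) (Finset.mem_univ j)
    have hs2' : 0 < ∑ t ∈ Finset.powersetCard 2 (Finset.univ : Finset (Fin n)),
        ∏ i ∈ t, lam i := hs2
    nlinarith [hsq, hs2', this]
  have hSA : ∑ i, lam i ≤ A := h1 ▸ hA1
  have hj2' : lam j ^ 2 ≤ A ^ 2 := by nlinarith
  exact abs_le_of_sq_le_sq' hj2' hA.le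
end

section
/- Maclaurin-type comparison: for an n-tuple λ of reals with σ_i(λ) > 0 for i = 1,…,k, and for 1 ≤ j ≤ k, one has σ_j(λ)^{1/j}/binom(n,j)^{1/j} ≥ σ_k(λ)^{1/k}/binom(n,k)^{1/k}. -/
open Polynomial Nat


lemma splits_derivative (p : ℝ[X]) (hp : p.Splits) :
    (derivative p).Splits := by
  by_cases hd : derivative p = 0
  · rw [hd]; exact Splits.zero
  · rw [splits_iff_card_roots] at hp ⊢
    have h1 := p.card_roots_le_derivative
    have h2 := (derivative p).card_roots'
    have h3 : p.natDegree ≠ 0 := by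
      intro h0
      exact hd (derivative_of_natDegree_zero h0)
    have h4 := natDegree_derivative_lt (p := p) h3
    have h5 := p.natDegree_derivative_le
    omega

lemma splits_iterate_derivative (p : ℝ[X]) (hp : p.Splits) (m : ℕ) :
    (derivative^[m] p).Splits := by
  induction m with
  | zero => exact hp
  | succ m ih => rw [Function.iterate_succ_apply']; exact splits_derivative _ ih

lemma reverse_multiset_prod (s : Multiset ℝ[X]) :
    s.prod.reverse = (s.map Polynomial.reverse).prod := by
  induction s using Multiset.induction with
  | empty => simp [Polynomial.reverse]
  | cons a s ih => simp [Multiset.prod_cons, reverse_mul_of_domain, ih]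

lemma splits_multiset_prod (s : Multiset ℝ[X]) (h : ∀ q ∈ s, q.Splits) :
    s.prod.Splits := by
  induction s using Multiset.induction with
  | empty => simp [Splits.one]
  | cons a s ih =>
    rw [Multiset.prod_cons]
    exact Splits.mul (h a (Multiset.mem_cons_self a s))
      (ih fun q hq => h q (Multiset.mem_cons_of_mem hq))

lemma splits_reverse (p : ℝ[X]) (hp : p.Splits) :
    p.reverse.Splits := by
  by_cases h0 : p = 0
  · rw [h0, reverse_zero]; exact Splits.zero
  · have := hp.eq_prod_roots
    rw [this, reverse_mul_of_domain, reverse_C, reverse_multiset_prod, Multiset.map_map]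
    refine Splits.mul (Splits.C _) (splits_multiset_prod _ ?_)
    intro q hq
    simp only [Multiset.mem_map, Function.comp_apply] at hq
    obtain ⟨r, _, rfl⟩ := hq
    exact Splits.of_natDegree_le_one (le_trans (reverse_natDegree_le _) (by simp))

lemma quad_discrim (q : ℝ[X]) (hs : q.Splits) (hd : q.natDegree ≤ 2) :
    4 * (q.coeff 0 * q.coeff 2) ≤ q.coeff 1 ^ 2 := by
  by_cases h2 : q.coeff 2 = 0
  · rw [h2]; nlinarith [sq_nonneg (q.coeff 1)]
  · have hdeg : q.natDegree = 2 := le_antisymm hd (le_natDegree_of_ne_zero h2)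
    have hq0 : q ≠ 0 := fun h => h2 (by simp [h])
    have hdeg' : q.degree = 2 := by rw [degree_eq_natDegree hq0, hdeg]; rfl
    obtain ⟨r, hr⟩ := hs.exists_eval_eq_zero (by rw [hdeg']; exact (by norm_num))
    have heval : q.eval r = 0 := by simpa using hr
    rw [eval_eq_sum_range, hdeg] at heval
    simp [Finset.sum_range_succ] at heval
    have key : 4 * q.coeff 2 * (q.coeff 0 + q.coeff 1 * r + q.coeff 2 * r ^ 2) = 0 := by
      rw [heval]; ring
    nlinarith [sq_nonneg (q.coeff 1 + 2 * q.coeff 2 * r), key]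

lemma newton_raw (g : ℝ[X]) (hs : g.Splits) (M : ℕ) (hN : g.natDegree = M + 2) :
    2 * ((M : ℝ) + 2) * (g.coeff 0 * g.coeff 2) ≤ ((M : ℝ) + 1) * g.coeff 1 ^ 2 := by
  set h := g.reverse with hh_def
  have hhs : h.Splits := splits_reverse g hs
  set q := derivative^[M] h with hq_def
  have hqs : q.Splits := splits_iterate_derivative h hhs M
  have hqd : q.natDegree ≤ 2 := by
    have h1 : q.natDegree ≤ h.natDegree - M := natDegree_iterate_derivative h M
    have h2 : h.natDegree ≤ M + 2 := by rw [hh_def, ← hN]; exact g.reverse_natDegree_le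
    omega
  have hq := quad_discrim q hqs hqd
  have hcoeff : ∀ m : ℕ, q.coeff m = ((m + M).descFactorial M : ℝ) * h.coeff (m + M) := by
    intro m
    rw [hq_def, coeff_iterate_derivative, nsmul_eq_mul]
  have hrev : ∀ m : ℕ, m ≤ M + 2 → h.coeff m = g.coeff (M + 2 - m) := by
    intro m hm
    rw [hh_def, coeff_reverse, revAt_le (by omega), hN]
  have e0 : q.coeff 0 = (M ! : ℝ) * g.coeff 2 := by
    rw [hcoeff 0, show 0 + M = M from by omega, hrev M (by omega),
      Nat.descFactorial_self, show M + 2 - M = 2 from by omega]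
  have e1 : q.coeff 1 = (M ! : ℝ) * ((M : ℝ) + 1) * g.coeff 1 := by
    rw [hcoeff 1, show 1 + M = M + 1 from by omega, hrev (M + 1) (by omega),
      Nat.descFactorial_eq_factorial_mul_choose, Nat.choose_succ_self_right,
      show M + 2 - (M + 1) = 1 from by omega]
    push_cast
    ring
  have e2 : q.coeff 2 = (M ! : ℝ) * (((M + 2).choose M : ℕ) : ℝ) * g.coeff 0 := by
    rw [hcoeff 2, show 2 + M = M + 2 from by omega, hrev (M + 2) (by omega),
      Nat.descFactorial_eq_factorial_mul_choose, show M + 2 - (M + 2) = 0 from by omega]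
    push_cast
    ring
  have hcm : 2 * (((M + 2).choose M : ℕ) : ℝ) = ((M : ℝ) + 2) * ((M : ℝ) + 1) := by
    have h1 : (M + 2).choose M = (M + 2).choose 2 := by
      conv_lhs => rw [show M = M + 2 - 2 from by omega]
      exact Nat.choose_symm (by omega)
    have h2 := Nat.add_one_mul_choose_eq (M + 1) 1
    rw [Nat.choose_one_right] at h2
    have h3 : (M + 2).choose M * 2 = (M + 2) * (M + 1) := by
      rw [h1, ← h2]
    have := congrArg (fun x : ℕ => (x : ℝ)) h3
    push_cast at this
    linarith
  rw [e0, e1, e2] at hq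
  have key : ((M : ℝ) + 1) * ((M ! : ℝ))^2 * (2 * ((M : ℝ) + 2) * (g.coeff 0 * g.coeff 2)) ≤
      ((M : ℝ) + 1) * ((M ! : ℝ))^2 * (((M : ℝ) + 1) * g.coeff 1 ^ 2) := by
    calc ((M : ℝ) + 1) * ((M ! : ℝ))^2 * (2 * ((M : ℝ) + 2) * (g.coeff 0 * g.coeff 2))
        = 4 * ((M ! : ℝ) * g.coeff 2 * ((M ! : ℝ) * (((M + 2).choose M : ℕ) : ℝ) * g.coeff 0)) := by
          linear_combination (-2 * ((M ! : ℝ))^2 * (g.coeff 0 * g.coeff 2)) * hcm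
      _ ≤ ((M ! : ℝ) * ((M : ℝ) + 1) * g.coeff 1) ^ 2 := hq
      _ = ((M : ℝ) + 1) * ((M ! : ℝ))^2 * (((M : ℝ) + 1) * g.coeff 1 ^ 2) := by ring
  have hpos : (0 : ℝ) < ((M : ℝ) + 1) * ((M ! : ℝ))^2 := by positivity
  exact le_of_mul_le_mul_left key hpos

lemma esymm_zero (n : ℕ) (lam : Fin n → ℝ) : esymm n 0 lam = 1 := by
  simp [esymm]

set_option maxHeartbeats 1000000 in
set_option maxHeartbeats 1000000 in
lemma newton_esymm (n k : ℕ) (hkn : k ≤ n) (lam : Fin n → ℝ)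
    (hpos : ∀ i : ℕ, 1 ≤ i → i ≤ k → 0 < esymm n i lam) (d : ℕ) (hd : d + 2 ≤ k) :
    esymm n d lam / (n.choose d : ℝ) * (esymm n (d + 2) lam / (n.choose (d + 2) : ℝ)) ≤
      (esymm n (d + 1) lam / (n.choose (d + 1) : ℝ)) ^ 2 := by
  obtain ⟨e, he⟩ : ∃ e, n = d + 2 + e := ⟨n - (d + 2), by omega⟩
  -- the polynomial
  set F : ℝ[X] := ∏ i : Fin n, (X + C (lam i)) with hF_def
  have hFdeg : F.natDegree = n := by
    rw [hF_def, natDegree_prod _ _ (fun i _ => (monic_X_add_C (lam i)).ne_zero)]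
    simp [natDegree_X_add_C]
  have hFsplits : F.Splits := by
    apply Splits.prod
    intro i _
    exact Splits.of_natDegree_le_one (le_of_eq (natDegree_X_add_C (lam i)))
  set f : ℝ[X] := F.reverse with hf_def
  have hfsplits : f.Splits := splits_reverse F hFsplits
  have hfcoeff : ∀ m : ℕ, m ≤ n → f.coeff m = esymm n m lam := by
    intro m hm
    rw [hf_def, coeff_reverse, hFdeg, revAt_le hm, hF_def,
      Finset.prod_X_add_C_coeff _ _ (by simp [Nat.sub_le] : n - m ≤ _)]
    simp only [Finset.card_univ, Fintype.card_fin]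
    rw [show n - (n - m) = m from by omega, esymm]
  set g : ℝ[X] := derivative^[d] f with hg_def
  have hgsplits : g.Splits := splits_iterate_derivative f hfsplits d
  have hgcoeff : ∀ m : ℕ, g.coeff m = ((m + d).descFactorial d : ℝ) * f.coeff (m + d) := by
    intro m
    rw [hg_def, coeff_iterate_derivative, nsmul_eq_mul]
  -- abbreviations
  have hs0 : 0 < esymm n d lam := by
    rcases Nat.eq_zero_or_pos d with h | h
    · subst h; rw [esymm_zero]; norm_num
    · exact hpos d h (by omega)
  have hs1 : 0 < esymm n (d + 1) lam := hpos (d + 1) (by omega) (by omega)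
  have hs2 : 0 < esymm n (d + 2) lam := hpos (d + 2) (by omega) (by omega)
  set s0 := esymm n d lam
  set s1 := esymm n (d + 1) lam
  set s2 := esymm n (d + 2) lam
  have e0 : g.coeff 0 = (d ! : ℝ) * s0 := by
    rw [hgcoeff 0, show 0 + d = d from by omega, hfcoeff d (by omega), Nat.descFactorial_self]
  have e1 : g.coeff 1 = ((d + 1)! : ℝ) * s1 := by
    rw [hgcoeff 1, show 1 + d = d + 1 from by omega, hfcoeff (d + 1) (by omega),
      Nat.descFactorial_eq_factorial_mul_choose, Nat.choose_succ_self_right]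
    push_cast [Nat.factorial_succ]
    ring
  have hDc : 2 * (((2 + d).descFactorial d : ℕ) : ℝ) = ((d + 2)! : ℝ) := by
    rw [Nat.descFactorial_eq_factorial_mul_choose]
    have h1 : (2 + d).choose d = (d + 2).choose 2 := by
      rw [show 2 + d = d + 2 from by omega]
      conv_lhs => rw [show d = d + 2 - 2 from by omega]
      exact Nat.choose_symm (by omega)
    have h2 := Nat.add_one_mul_choose_eq (d + 1) 1
    rw [Nat.choose_one_right] at h2
    have h3 : (2 + d).choose d * 2 = (d + 2) * (d + 1) := by rw [h1, ← h2]
    have h4 : d ! * (2 + d).choose d * 2 = (d + 2)! := by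
      rw [Nat.mul_assoc, h3, show (d+2)! = (d+2)*(d+1)*d ! from by
        rw [Nat.factorial_succ, Nat.factorial_succ]; ring]
      ring
    have := congrArg (fun x : ℕ => (x : ℝ)) h4
    push_cast at this ⊢
    linarith
  have e2 : 2 * g.coeff 2 = ((d + 2)! : ℝ) * s2 := by
    rw [hgcoeff 2, hfcoeff (2 + d) (by omega), show ((2:ℕ) + d) = d + 2 from by omega]
    rw [show (2:ℕ) + d = d + 2 from by omega] at hDc
    rw [← mul_assoc, hDc]
  -- degree bounds
  have hg2ne : g.coeff 2 ≠ 0 := by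
    intro h
    rw [h, mul_zero] at e2
    have : ((d + 2)! : ℝ) > 0 := by positivity
    nlinarith
  have hN2 : 2 ≤ g.natDegree := le_natDegree_of_ne_zero hg2ne
  obtain ⟨M, hM⟩ : ∃ M, g.natDegree = M + 2 := ⟨g.natDegree - 2, by omega⟩
  have hMe : M ≤ e := by
    have h1 : g.natDegree ≤ f.natDegree - d := natDegree_iterate_derivative f d
    have h2 : f.natDegree ≤ n := by
      rw [hf_def, ← hFdeg]; exact F.reverse_natDegree_le
    omega
  have raw := newton_raw g hgsplits M hM
  -- pass from M to e
  set a : ℝ := (d ! : ℝ) with ha_def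
  set a1 : ℝ := ((d + 1)! : ℝ) with ha1_def
  set a2 : ℝ := ((d + 2)! : ℝ) with ha2_def
  have hP : (0 : ℝ) < a * a2 * (s0 * s2) := by positivity
  have main1 : ((M : ℝ) + 2) * (a * a2 * (s0 * s2)) ≤ ((M : ℝ) + 1) * (a1 ^ 2 * s1 ^ 2) := by
    have e2' : g.coeff 2 = a2 * s2 / 2 := by linarith [e2]
    rw [e0, e1, e2'] at raw
    nlinarith [raw]
  have hQP : a * a2 * (s0 * s2) ≤ a1 ^ 2 * s1 ^ 2 := by nlinarith [main1, hP]
  have main2 : ((e : ℝ) + 2) * (a * a2 * (s0 * s2)) ≤ ((e : ℝ) + 1) * (a1 ^ 2 * s1 ^ 2) := by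
    have hMe' : (M : ℝ) ≤ (e : ℝ) := by exact_mod_cast hMe
    nlinarith [main1, mul_nonneg (sub_nonneg.mpr hMe') (sub_nonneg.mpr hQP)]
  -- factorials of e side
  set b : ℝ := (e ! : ℝ) with hb_def
  set b1 : ℝ := ((e + 1)! : ℝ) with hb1_def
  set b2 : ℝ := ((e + 2)! : ℝ) with hb2_def
  have fb1 : b1 = ((e : ℝ) + 1) * b := by rw [hb1_def, hb_def]; push_cast [Nat.factorial_succ]; ring
  have fb2 : b2 = ((e : ℝ) + 2) * b1 := by
    rw [hb2_def, hb1_def]; push_cast [Nat.factorial_succ]; ring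
  set c0 : ℝ := (n.choose d : ℝ) with hc0_def
  set c1 : ℝ := (n.choose (d + 1) : ℝ) with hc1_def
  set c2 : ℝ := (n.choose (d + 2) : ℝ) with hc2_def
  set nf : ℝ := (n ! : ℝ) with hnf_def
  have id0 : c0 * (a * b2) = nf := by
    rw [hc0_def, ha_def, hb2_def, hnf_def]
    have := Nat.choose_mul_factorial_mul_factorial (show d ≤ n by omega)
    rw [show n - d = e + 2 from by omega] at this
    exact_mod_cast congrArg (fun x : ℕ => (x : ℝ)) (by rw [← this]; ring)
  have id1 : c1 * (a1 * b1) = nf := by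
    rw [hc1_def, ha1_def, hb1_def, hnf_def]
    have := Nat.choose_mul_factorial_mul_factorial (show d + 1 ≤ n by omega)
    rw [show n - (d + 1) = e + 1 from by omega] at this
    exact_mod_cast congrArg (fun x : ℕ => (x : ℝ)) (by rw [← this]; ring)
  have id2 : c2 * (a2 * b) = nf := by
    rw [hc2_def, ha2_def, hb_def, hnf_def]
    have := Nat.choose_mul_factorial_mul_factorial (show d + 2 ≤ n by omega)
    rw [show n - (d + 2) = e from by omega] at this
    exact_mod_cast congrArg (fun x : ℕ => (x : ℝ)) (by rw [← this]; ring)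
  have hc0 : (0 : ℝ) < c0 := by
    rw [hc0_def]; exact_mod_cast Nat.choose_pos (show d ≤ n by omega)
  have hc1 : (0 : ℝ) < c1 := by
    rw [hc1_def]; exact_mod_cast Nat.choose_pos (show d + 1 ≤ n by omega)
  have hc2 : (0 : ℝ) < c2 := by
    rw [hc2_def]; exact_mod_cast Nat.choose_pos (show d + 2 ≤ n by omega)
  have ha : (0:ℝ) < a := by rw [ha_def]; positivity
  have ha1 : (0:ℝ) < a1 := by rw [ha1_def]; positivity
  have ha2 : (0:ℝ) < a2 := by rw [ha2_def]; positivity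
  have hb : (0:ℝ) < b := by rw [hb_def]; positivity
  have hb1 : (0:ℝ) < b1 := by rw [hb1_def]; positivity
  have hb2 : (0:ℝ) < b2 := by rw [hb2_def]; positivity
  -- step1
  have step1 : s0 * s2 * (a * a2 * b * b2) ≤ s1 ^ 2 * (a1 * b1) ^ 2 := by
    have h := mul_le_mul_of_nonneg_right main2 (show (0:ℝ) ≤ ((e : ℝ) + 1) * b ^ 2 by positivity)
    calc s0 * s2 * (a * a2 * b * b2)
        = ((e : ℝ) + 2) * (a * a2 * (s0 * s2)) * (((e : ℝ) + 1) * b ^ 2) := by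
          rw [fb2, fb1]; ring
      _ ≤ ((e : ℝ) + 1) * (a1 ^ 2 * s1 ^ 2) * (((e : ℝ) + 1) * b ^ 2) := h
      _ = s1 ^ 2 * (a1 * (((e : ℝ) + 1) * b)) ^ 2 := by ring
      _ = s1 ^ 2 * (a1 * b1) ^ 2 := by rw [fb1]
  have hprod : c0 * c2 * (a * a2 * b * b2) = c1 ^ 2 * (a1 * b1) ^ 2 := by
    have h1 : c0 * (a * b2) * (c2 * (a2 * b)) = nf * nf := by rw [id0, id2]
    have h2 : (c1 * (a1 * b1)) * (c1 * (a1 * b1)) = nf * nf := by rw [id1]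
    linear_combination h1 - h2
  have G' : s0 * s2 * c1 ^ 2 ≤ s1 ^ 2 * (c0 * c2) := by
    have h := mul_le_mul_of_nonneg_right step1 (le_of_lt (mul_pos hc1 hc1))
    have key : s0 * s2 * c1 ^ 2 * (a * a2 * b * b2) ≤
        s1 ^ 2 * (c0 * c2) * (a * a2 * b * b2) := by
      calc s0 * s2 * c1 ^ 2 * (a * a2 * b * b2)
          = s0 * s2 * (a * a2 * b * b2) * (c1 * c1) := by ring
        _ ≤ s1 ^ 2 * (a1 * b1) ^ 2 * (c1 * c1) := h
        _ = s1 ^ 2 * (c1 ^ 2 * (a1 * b1) ^ 2) := by ring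
        _ = s1 ^ 2 * (c0 * c2 * (a * a2 * b * b2)) := by rw [hprod]
        _ = s1 ^ 2 * (c0 * c2) * (a * a2 * b * b2) := by ring
    exact le_of_mul_le_mul_right key (by positivity)
  have goal2 : s0 / c0 * (s2 / c2) = s0 * s2 / (c0 * c2) := div_mul_div_comm s0 c0 s2 c2
  rw [goal2, div_pow, div_le_div_iff₀ (by positivity) (by positivity)]
  exact G'

section
variable (n k : ℕ) (lam : Fin n → ℝ)

lemma P_pos (hkn : k ≤ n) (hpos : ∀ i : ℕ, 1 ≤ i → i ≤ k → 0 < esymm n i lam)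
    (m : ℕ) (hm : m ≤ k) : 0 < esymm n m lam / (n.choose m : ℝ) := by
  have hc : 0 < (n.choose m : ℝ) := by exact_mod_cast Nat.choose_pos (le_trans hm hkn)
  rcases Nat.eq_zero_or_pos m with h | h
  · subst h; rw [esymm_zero]; positivity
  · exact div_pos (hpos m h hm) hc

lemma chain_pow (hkn : k ≤ n) (hpos : ∀ i : ℕ, 1 ≤ i → i ≤ k → 0 < esymm n i lam) :
    ∀ m : ℕ, m + 1 ≤ k →
      (esymm n (m + 1) lam / (n.choose (m + 1) : ℝ)) ^ m ≤
        (esymm n m lam / (n.choose m : ℝ)) ^ (m + 1) := by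
  intro m
  induction m with
  | zero =>
    intro _
    simp [esymm_zero]
  | succ m ih =>
    intro hm1
    have IH := ih (by omega)
    set P0 := esymm n m lam / (n.choose m : ℝ) with hP0
    set P1 := esymm n (m + 1) lam / (n.choose (m + 1) : ℝ) with hP1
    set P2 := esymm n (m + 2) lam / (n.choose (m + 2) : ℝ) with hP2
    have hp0 : 0 < P0 := P_pos n k lam hkn hpos m (by omega)
    have hp1 : 0 < P1 := P_pos n k lam hkn hpos (m + 1) (by omega)
    have hp2 : 0 < P2 := P_pos n k lam hkn hpos (m + 2) (by omega)
    have newton := newton_esymm n k hkn lam hpos m (by omega)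
    rw [← hP0, ← hP1, ← hP2] at newton
    -- goal : P2 ^ (m+1) ≤ P1 ^ (m+2)
    have h1 : (P0 * P2) ^ (m + 1) ≤ (P1 ^ 2) ^ (m + 1) :=
      pow_le_pow_left₀ (by positivity) newton (m + 1)
    have h2 : P1 ^ m * P2 ^ (m + 1) ≤ P0 ^ (m + 1) * P2 ^ (m + 1) :=
      mul_le_mul_of_nonneg_right IH (by positivity)
    have h3 : P0 ^ (m + 1) * P2 ^ (m + 1) ≤ P1 ^ (m + 2) * P1 ^ m := by
      calc P0 ^ (m + 1) * P2 ^ (m + 1) = (P0 * P2) ^ (m + 1) := by rw [mul_pow]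
        _ ≤ (P1 ^ 2) ^ (m + 1) := h1
        _ = P1 ^ (m + 2) * P1 ^ m := by rw [← pow_mul, ← pow_add]; congr 1; omega
    have h4 : P2 ^ (m + 1) * P1 ^ m ≤ P1 ^ (m + 2) * P1 ^ m := by
      calc P2 ^ (m + 1) * P1 ^ m = P1 ^ m * P2 ^ (m + 1) := by ring
        _ ≤ P0 ^ (m + 1) * P2 ^ (m + 1) := h2
        _ ≤ P1 ^ (m + 2) * P1 ^ m := h3
    exact le_of_mul_le_mul_right h4 (by positivity)

lemma chain_step (hkn : k ≤ n) (hpos : ∀ i : ℕ, 1 ≤ i → i ≤ k → 0 < esymm n i lam)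
    (m : ℕ) (hm : 1 ≤ m) (hm1 : m + 1 ≤ k) :
    (esymm n (m + 1) lam / (n.choose (m + 1) : ℝ)) ^ ((1 : ℝ) / (m + 1)) ≤
      (esymm n m lam / (n.choose m : ℝ)) ^ ((1 : ℝ) / m) := by
  set P0 := esymm n m lam / (n.choose m : ℝ) with hP0
  set P1 := esymm n (m + 1) lam / (n.choose (m + 1) : ℝ) with hP1
  have hp0 : 0 < P0 := P_pos n k lam hkn hpos m (by omega)
  have hp1 : 0 < P1 := P_pos n k lam hkn hpos (m + 1) (by omega)
  have h := chain_pow n k lam hkn hpos m hm1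
  rw [← hP0, ← hP1] at h
  have e : (0:ℝ) < 1 / ((m : ℝ) * ((m : ℝ) + 1)) := by positivity
  have h2 := Real.rpow_le_rpow (by positivity) h (le_of_lt e)
  have lhs_eq : ((P1 ^ m : ℝ)) ^ ((1 : ℝ) / ((m : ℝ) * ((m : ℝ) + 1))) =
      P1 ^ ((1 : ℝ) / ((m : ℝ) + 1)) := by
    rw [← Real.rpow_natCast P1 m, ← Real.rpow_mul (le_of_lt hp1)]
    congr 1
    field_simp
  have rhs_eq : ((P0 ^ (m + 1) : ℝ)) ^ ((1 : ℝ) / ((m : ℝ) * ((m : ℝ) + 1))) =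
      P0 ^ ((1 : ℝ) / (m : ℝ)) := by
    rw [← Real.rpow_natCast P0 (m + 1), ← Real.rpow_mul (le_of_lt hp0)]
    congr 1
    push_cast
    field_simp
  rw [lhs_eq, rhs_eq] at h2
  convert h2 using 2 <;> push_cast <;> ring

lemma chain_all (hkn : k ≤ n) (hpos : ∀ i : ℕ, 1 ≤ i → i ≤ k → 0 < esymm n i lam) :
    ∀ r m : ℕ, 1 ≤ m → m + r ≤ k →
      (esymm n (m + r) lam / (n.choose (m + r) : ℝ)) ^ ((1 : ℝ) / ((m + r : ℕ) : ℝ)) ≤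
        (esymm n m lam / (n.choose m : ℝ)) ^ ((1 : ℝ) / m) := by
  intro r
  induction r with
  | zero => intro m hm hmk; simp
  | succ r ih =>
    intro m hm hmk
    have step := chain_step n k lam hkn hpos (m + r) (by omega) (by omega)
    have IH := ih m hm (by omega)
    calc (esymm n (m + (r + 1)) lam / (n.choose (m + (r + 1)) : ℝ)) ^ ((1 : ℝ) / ((m + (r + 1) : ℕ) : ℝ))
        = (esymm n (m + r + 1) lam / (n.choose (m + r + 1) : ℝ)) ^ ((1 : ℝ) / (((m + r : ℕ) : ℝ) + 1)) := by
          rw [show m + (r + 1) = m + r + 1 from by omega]; norm_num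
      _ ≤ (esymm n (m + r) lam / (n.choose (m + r) : ℝ)) ^ ((1 : ℝ) / (m + r : ℕ)) := step
      _ ≤ _ := IH

end

theorem maclaurin_gamma_k (n k j : ℕ) (hkn : k ≤ n) (hj : 1 ≤ j) (hjk : j ≤ k)
    (lam : Fin n → ℝ)
    (hpos : ∀ i : ℕ, 1 ≤ i → i ≤ k → 0 < esymm n i lam) :
    esymm n k lam ^ ((1 : ℝ) / k) / ((n.choose k : ℝ)) ^ ((1 : ℝ) / k) ≤
      esymm n j lam ^ ((1 : ℝ) / j) / ((n.choose j : ℝ)) ^ ((1 : ℝ) / j) := by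
  have hk1 : 1 ≤ k := le_trans hj hjk
  have hsk : 0 ≤ esymm n k lam := le_of_lt (hpos k hk1 le_rfl)
  have hsj : 0 ≤ esymm n j lam := le_of_lt (hpos j hj hjk)
  have h := chain_all n k lam hkn hpos (k - j) j hj (by omega)
  rw [show j + (k - j) = k from by omega] at h
  calc esymm n k lam ^ ((1 : ℝ) / k) / ((n.choose k : ℝ)) ^ ((1 : ℝ) / k)
      = (esymm n k lam / (n.choose k : ℝ)) ^ ((1 : ℝ) / k) := (Real.div_rpow hsk (by positivity) _).symm
    _ ≤ (esymm n j lam / (n.choose j : ℝ)) ^ ((1 : ℝ) / j) := h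
    _ = esymm n j lam ^ ((1 : ℝ) / j) / ((n.choose j : ℝ)) ^ ((1 : ℝ) / j) := Real.div_rpow hsj (by positivity) _
end
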